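/- arXiv:1302.2185 — 3 statements merged into one kernel-verified Lean document; each statement's English description precedes it below -/
import Mathlib

section
/- Let k be a positive natural number, let n : Fin k → ℝ satisfy n i > 0 for all i, let P > 0, and let ν ∈ ℝ satisfy ∑ i, max (ν − n i) 0 = P. Then for every power allocation p : Fin k → ℝ with p i ≥ 0 for all i and ∑ i, p i ≤ P, one has ∑ i, Real.log (1 + p i / n i) ≤ ∑ i, Real.log (1 + (max (ν − n i) 0) / n i). In other words, the water-filling allocation p i = (ν − n i)⁺ maximizes the total rate ∑ i log(1 + p i / n i) subject to the power budget P. -/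
/-- Water-filling optimality (finite, per-subcarrier): the allocation
`p i = (ν − n i)⁺` maximizes `∑ i log (1 + p i / n i)` subject to `∑ p i ≤ P`. -/
theorem waterfilling_optimal (k : ℕ) (hk : 0 < k) (n : Fin k → ℝ)
    (hn : ∀ i, 0 < n i) (P : ℝ) (hP : 0 < P) (ν : ℝ)
    (hν : ∑ i, max (ν - n i) 0 = P)
    (p : Fin k → ℝ) (hp : ∀ i, 0 ≤ p i) (hsum : ∑ i, p i ≤ P) :
    ∑ i, Real.log (1 + p i / n i) ≤
      ∑ i, Real.log (1 + max (ν - n i) 0 / n i) := by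
  set q : Fin k → ℝ := fun i => max (ν - n i) 0 with hq
  have hν0 : 0 < ν := by
    by_contra h
    push_neg at h
    have hz : ∑ i, max (ν - n i) 0 = 0 :=
      Finset.sum_eq_zero fun i _ => max_eq_right (by linarith [hn i])
    linarith [hz ▸ hν]
  have key : ∀ i, Real.log (1 + p i / n i) - Real.log (1 + q i / n i)
      ≤ (p i - q i) / (n i + q i) := by
    intro i
    have hni := hn i
    have hq0 : (0:ℝ) ≤ q i := le_max_right _ _
    have h1 : 0 < 1 + p i / n i := by
      have := div_nonneg (hp i) hni.le; linarith
    have h2 : 0 < 1 + q i / n i := by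
      have := div_nonneg hq0 hni.le; linarith
    have hlog := Real.log_le_sub_one_of_pos (div_pos h1 h2)
    rw [Real.log_div (ne_of_gt h1) (ne_of_gt h2)] at hlog
    have heq : (1 + p i / n i) / (1 + q i / n i) - 1 = (p i - q i) / (n i + q i) := by
      have hnq : n i + q i ≠ 0 := by positivity
      field_simp
      ring
    linarith [heq ▸ hlog]
  have sum2 : ∑ i, (p i - q i) / (n i + q i) ≤ 0 := by
    have step : ∀ i ∈ Finset.univ, (p i - q i) / (n i + q i) ≤ (p i - q i) / ν := by
      intro i _
      by_cases hcase : ν - n i ≤ 0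
      · have hqi : q i = 0 := max_eq_right hcase
        rw [hqi, sub_zero, add_zero]
        gcongr
        · exact hp i
        · linarith
      · have hqi : q i = ν - n i := max_eq_left (by linarith)
        rw [hqi]
        have : n i + (ν - n i) = ν := by ring
        rw [this]
    calc ∑ i, (p i - q i) / (n i + q i) ≤ ∑ i, (p i - q i) / ν :=
          Finset.sum_le_sum step
      _ = (∑ i, p i - ∑ i, q i) / ν := by
          rw [← Finset.sum_sub_distrib, Finset.sum_div]
      _ ≤ 0 := by
          have hqsum : ∑ i, q i = P := hν
          rw [hqsum]
          apply div_nonpos_of_nonpos_of_nonneg <;> linarith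
  have := Finset.sum_le_sum fun i (_ : i ∈ Finset.univ) => key i
  rw [Finset.sum_sub_distrib] at this
  linarith [sum2, this]
end

section
/- Let S : ℝ → ℝ be a measurable noise power spectral density with c ≤ S f for all f ∈ [−π, π] for some constant c > 0, let P > 0, and let ν ∈ ℝ satisfy ∫ f in Set.Icc (−π) π, max (ν − S f) 0 = P (Lebesgue integral). Then for every measurable p : ℝ → ℝ with 0 ≤ p f for all f ∈ [−π, π], with p integrable on [−π, π], and with ∫ f in Set.Icc (−π) π, p f ≤ P, one has ∫ f in Set.Icc (−π) π, Real.log (1 + p f / S f) ≤ ∫ f in Set.Icc (−π) π, Real.log (1 + (max (ν − S f) 0) / S f). (Both integrands are nonnegative and bounded above by p f / c, resp. (ν − S f)⁺ / c, so both integrals are well-defined and finite.) -/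
open MeasureTheory Real

/-- Continuous-frequency water-filling optimality over the band `[−π, π]`. -/
theorem waterfilling_optimal_continuous (S : ℝ → ℝ) (hS : Measurable S)
    (c : ℝ) (hc : 0 < c) (hSc : ∀ f ∈ Set.Icc (-π) π, c ≤ S f)
    (P : ℝ) (hP : 0 < P) (ν : ℝ)
    (hν : ∫ f in Set.Icc (-π) π, max (ν - S f) 0 = P)
    (p : ℝ → ℝ) (hpm : Measurable p)
    (hp0 : ∀ f ∈ Set.Icc (-π) π, 0 ≤ p f)
    (hpint : IntegrableOn p (Set.Icc (-π) π))
    (hpP : ∫ f in Set.Icc (-π) π, p f ≤ P) :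
    ∫ f in Set.Icc (-π) π, Real.log (1 + p f / S f) ≤
      ∫ f in Set.Icc (-π) π, Real.log (1 + max (ν - S f) 0 / S f) := by
  set I := Set.Icc (-π) π with hI
  have hIm : MeasurableSet I := measurableSet_Icc
  have hIfin : volume I ≠ ⊤ := by
    simp [hI]
  -- ν must be positive
  have hν0 : 0 < ν := by
    by_contra h
    push_neg at h
    have hz : ∫ f in I, max (ν - S f) 0 = 0 := by
      rw [setIntegral_congr_fun hIm (g := fun _ => (0:ℝ))
        (fun f hf => by
          have := hSc f hf
          simp only
          rw [max_eq_right]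
          linarith)]
      simp
    rw [hν] at hz
    linarith
  set q : ℝ → ℝ := fun f => max (ν - S f) 0 with hq
  have hqm : Measurable q := (measurable_const.sub hS).max measurable_const
  have hq0 : ∀ f, 0 ≤ q f := fun f => le_max_right _ _
  -- integrability of q on I
  have hqint : IntegrableOn q I := by
    apply Measure.integrableOn_of_bounded hIfin (hqm.aestronglyMeasurable) (M := ν)
    filter_upwards [ae_restrict_mem hIm] with f hf
    rw [Real.norm_eq_abs, abs_of_nonneg (hq0 f)]
    have := hSc f hf
    exact max_le (by linarith) (le_of_lt hν0)
  -- integrability of log(1 + p/S)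
  have hlogpm : Measurable fun f => Real.log (1 + p f / S f) :=
    (measurable_const.add (hpm.div hS)).log
  have hlogqm : Measurable fun f => Real.log (1 + q f / S f) :=
    (measurable_const.add (hqm.div hS)).log
  have key : ∀ f ∈ I, 0 < S f := fun f hf => lt_of_lt_of_le hc (hSc f hf)
  have hlogp_int : IntegrableOn (fun f => Real.log (1 + p f / S f)) I := by
    apply Integrable.mono' (g := fun f => p f / c) (hpint.div_const c)
      hlogpm.aestronglyMeasurable
    filter_upwards [ae_restrict_mem hIm] with f hf
    have hSf := key f hf
    have hpf := hp0 f hf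
    have h1 : (0:ℝ) ≤ p f / S f := div_nonneg hpf hSf.le
    rw [Real.norm_eq_abs, abs_of_nonneg (Real.log_nonneg (by linarith))]
    calc Real.log (1 + p f / S f) ≤ (1 + p f / S f) - 1 :=
          Real.log_le_sub_one_of_pos (by linarith)
      _ = p f / S f := by ring
      _ ≤ p f / c := div_le_div_of_nonneg_left hpf hc (hSc f hf)
  have hlogq_int : IntegrableOn (fun f => Real.log (1 + q f / S f)) I := by
    apply Measure.integrableOn_of_bounded hIfin hlogqm.aestronglyMeasurable (M := ν / c)
    filter_upwards [ae_restrict_mem hIm] with f hf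
    have hSf := key f hf
    have h1 : (0:ℝ) ≤ q f / S f := div_nonneg (hq0 f) hSf.le
    rw [Real.norm_eq_abs, abs_of_nonneg (Real.log_nonneg (by linarith))]
    calc Real.log (1 + q f / S f) ≤ (1 + q f / S f) - 1 :=
          Real.log_le_sub_one_of_pos (by linarith)
      _ = q f / S f := by ring
      _ ≤ ν / c := div_le_div₀ (le_of_lt hν0) (by
          have := hSc f hf; exact max_le (by linarith) hν0.le) hc (hSc f hf)
  -- pointwise key inequality
  have hpt : ∀ f ∈ I, Real.log (1 + p f / S f) - Real.log (1 + q f / S f)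
      ≤ (p f - q f) / ν := by
    intro f hf
    have hSf := key f hf
    have hpf := hp0 f hf
    have hqf := hq0 f
    have h1 : (0:ℝ) < 1 + p f / S f := by positivity
    have h2 : (0:ℝ) < 1 + q f / S f := by positivity
    have e1 : 1 + p f / S f = (S f + p f) / S f := by field_simp
    have e2 : 1 + q f / S f = (S f + q f) / S f := by field_simp
    have hSp : 0 < S f + p f := by linarith
    have hSq : 0 < S f + q f := by linarith
    have hlog : Real.log (1 + p f / S f) - Real.log (1 + q f / S f)
        = Real.log ((S f + p f) / (S f + q f)) := by
      rw [e1, e2, Real.log_div hSp.ne' hSf.ne', Real.log_div hSq.ne' hSf.ne',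
        Real.log_div hSp.ne' hSq.ne']
      ring
    rw [hlog]
    have hle : Real.log ((S f + p f) / (S f + q f)) ≤ (p f - q f) / (S f + q f) := by
      calc Real.log ((S f + p f) / (S f + q f)) ≤ (S f + p f) / (S f + q f) - 1 :=
            Real.log_le_sub_one_of_pos (by positivity)
        _ = (p f - q f) / (S f + q f) := by
            rw [div_sub_one hSq.ne']
            congr 1
            ring
    refine hle.trans ?_
    rcases le_or_gt (ν - S f) 0 with h | h
    · -- q f = 0, S f ≥ ν
      have hqz : q f = 0 := max_eq_right h
      rw [hqz]
      simp only [sub_zero, add_zero]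
      exact div_le_div_of_nonneg_left hpf hν0 (by linarith)
    · -- q f = ν - S f, S f + q f = ν
      have : q f = ν - S f := max_eq_left h.le
      rw [this]
      have : S f + (ν - S f) = ν := by ring
      rw [this]
  -- integrate
  have hdiff : ∫ f in I, (Real.log (1 + p f / S f) - Real.log (1 + q f / S f))
      ≤ ∫ f in I, (p f - q f) / ν := by
    apply setIntegral_mono_on (hlogp_int.sub hlogq_int)
      ((hpint.sub hqint).div_const ν) hIm hpt
  rw [integral_sub hlogp_int hlogq_int] at hdiff
  have hr : ∫ f in I, (p f - q f) / ν = ((∫ f in I, p f) - P) / ν := by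
    rw [integral_div, integral_sub hpint hqint, hν]
  rw [hr] at hdiff
  have : ((∫ f in I, p f) - P) / ν ≤ 0 :=
    div_nonpos_of_nonpos_of_nonneg (by linarith) hν0.le
  linarith
end

section
/- Let T be a natural number with T ≥ 2 and let P_R > 0 be fixed. For P_D > 0 define σ_τ²(P_D) = P_R·(T−1)·T·(2T−1)/6 / (P_D + (T−1)·P_R) − (P_R·T·(T−1)/2 / (P_D + (T−1)·P_R))², the squared RMS delay spread of the two-level power delay profile with direct-path power P_D and reflected-path power P_R. Then σ_τ² attains its maximum over P_D ∈ (0, ∞) at the unique point P_D* = (T² − 1)·P_R / (2T − 1); moreover σ_τ² is strictly increasing on (0, P_D*] and strictly decreasing on [P_D*, ∞) (for T ≥ 3; for T = 2 the same holds with P_D* = P_R). -/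
/-- Generic fact: for `g x = A/x - B/x²`, if `A·x·y < B·(x+y)` then `g x < g y`
for `0 < x < y`. -/
lemma twoLevel_aux_lt (A B x y : ℝ) (hx : 0 < x) (hy : 0 < y) (hxy : x < y)
    (h : A * (x * y) < B * (x + y)) :
    A / x - B / x ^ 2 < A / y - B / y ^ 2 := by
  have hx2 : (0:ℝ) < x ^ 2 := by positivity
  have hy2 : (0:ℝ) < y ^ 2 := by positivity
  rw [show A / x - B / x ^ 2 = (A * x - B) / x ^ 2 by
        field_simp,
      show A / y - B / y ^ 2 = (A * y - B) / y ^ 2 by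
        field_simp,
      div_lt_div_iff₀ hx2 hy2]
  nlinarith [mul_pos (sub_pos.2 hxy) (sub_pos.2 h)]

/-- Generic fact: for `g x = A/x - B/x²`, if `A·x·y > B·(x+y)` then `g x > g y`
for `0 < x < y`. -/
lemma twoLevel_aux_gt (A B x y : ℝ) (hx : 0 < x) (hy : 0 < y) (hxy : x < y)
    (h : B * (x + y) < A * (x * y)) :
    A / y - B / y ^ 2 < A / x - B / x ^ 2 := by
  have hx2 : (0:ℝ) < x ^ 2 := by positivity
  have hy2 : (0:ℝ) < y ^ 2 := by positivity
  rw [show A / x - B / x ^ 2 = (A * x - B) / x ^ 2 by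
        field_simp,
      show A / y - B / y ^ 2 = (A * y - B) / y ^ 2 by
        field_simp,
      div_lt_div_iff₀ hy2 hx2]
  nlinarith [mul_pos (sub_pos.2 hxy) (sub_pos.2 h)]

/-- The squared RMS delay spread of the two-level power delay profile, as a
function of the direct-path power `P_D`, attains its maximum over
`P_D ∈ (0, ∞)` at the unique point `P_D* = (T² − 1)·P_R / (2T − 1)`; it is
strictly increasing on `(0, P_D*]` and strictly decreasing on `[P_D*, ∞)`.
(For `T = 2` the formula gives `P_D* = P_R`.) -/
theorem twoLevel_delay_spread_max (T : ℕ) (hT : 2 ≤ T) (PR : ℝ) (hPR : 0 < PR) :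
    let σ2 : ℝ → ℝ := fun PD =>
      PR * (((T : ℝ) - 1) * (T : ℝ) * (2 * (T : ℝ) - 1) / 6) / (PD + ((T : ℝ) - 1) * PR)
        - (PR * ((T : ℝ) * ((T : ℝ) - 1) / 2) / (PD + ((T : ℝ) - 1) * PR)) ^ 2
    let PDstar : ℝ := ((T : ℝ) ^ 2 - 1) * PR / (2 * (T : ℝ) - 1)
    (∀ PD ∈ Set.Ioi (0 : ℝ), σ2 PD ≤ σ2 PDstar) ∧
    (∀ PD ∈ Set.Ioi (0 : ℝ), σ2 PD = σ2 PDstar → PD = PDstar) ∧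
    StrictMonoOn σ2 (Set.Ioc 0 PDstar) ∧
    StrictAntiOn σ2 (Set.Ici PDstar) := by
  intro σ2 PDstar
  have ht : (2:ℝ) ≤ (T:ℝ) := by exact_mod_cast hT
  set t : ℝ := (T:ℝ) with hteq
  have ht1 : 0 < t - 1 := by linarith
  have ht2 : 0 < 2 * t - 1 := by linarith
  have ht0 : 0 < t := by linarith
  set A : ℝ := PR * ((t - 1) * t * (2 * t - 1) / 6) with hA_def
  set B : ℝ := (PR * (t * (t - 1) / 2)) ^ 2 with hB_def
  set c : ℝ := (t - 1) * PR with hc_def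
  have hc : 0 < c := mul_pos ht1 hPR
  have hA : 0 < A := by
    apply mul_pos hPR
    apply div_pos (mul_pos (mul_pos ht1 ht0) ht2) (by norm_num)
  have hPDs : PDstar = (t ^ 2 - 1) * PR / (2 * t - 1) := rfl
  have hPDs_pos : 0 < PDstar := by
    rw [hPDs]
    apply div_pos _ ht2
    nlinarith
  have hσ : ∀ PD : ℝ, σ2 PD = A / (PD + c) - B / (PD + c) ^ 2 := by
    intro PD
    show _ - _ = _
    rw [hA_def, hB_def, hc_def, ← hteq, div_pow]
  have hxs : A * (PDstar + c) = 2 * B := by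
    rw [hPDs, hA_def, hB_def, hc_def]
    have h2t : 2 * t - 1 ≠ 0 := ht2.ne'
    rw [div_add' _ _ _ h2t, mul_div_assoc', div_eq_iff h2t]
    ring
  -- strict monotonicity on (0, PDstar]
  have hmono : StrictMonoOn σ2 (Set.Ioc 0 PDstar) := by
    intro PD1 h1 PD2 h2 h12
    have hx1 : 0 < PD1 + c := by have := h1.1; linarith
    have hx2 : 0 < PD2 + c := by have := h2.1; linarith
    rw [hσ, hσ]
    apply twoLevel_aux_lt _ _ _ _ hx1 hx2 (by linarith)
    have hle2 : PD2 + c ≤ PDstar + c := by have := h2.2; linarith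
    have hlt1 : PD1 + c < PDstar + c := by have := h2.2; linarith
    nlinarith [mul_nonneg hx1.le (sub_nonneg.2 hle2),
      mul_pos hx2 (sub_pos.2 hlt1), hA]
  -- strict antitonicity on [PDstar, ∞)
  have hanti : StrictAntiOn σ2 (Set.Ici PDstar) := by
    intro PD1 h1 PD2 h2 h12
    have hx1 : 0 < PD1 + c := by
      have : PDstar ≤ PD1 := h1; linarith
    have hx2 : 0 < PD2 + c := by
      have : PDstar ≤ PD2 := h2; linarith
    rw [hσ, hσ]
    apply twoLevel_aux_gt _ _ _ _ hx1 hx2 (by linarith)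
    have hge1 : PDstar + c ≤ PD1 + c := by have : PDstar ≤ PD1 := h1; linarith
    have hgt2 : PDstar + c < PD2 + c := by
      have : PDstar ≤ PD1 := h1; linarith
    nlinarith [mul_nonneg hx2.le (sub_nonneg.2 hge1),
      mul_pos hx1 (sub_pos.2 hgt2), hA]
  have hmax : ∀ PD ∈ Set.Ioi (0:ℝ), PD ≠ PDstar → σ2 PD < σ2 PDstar := by
    intro PD hPD hne
    rcases lt_or_gt_of_ne hne with h | h
    · exact hmono ⟨hPD, h.le⟩ ⟨hPDs_pos, le_refl _⟩ h
    · exact hanti Set.self_mem_Ici h.le h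
  refine ⟨?_, ?_, hmono, hanti⟩
  · intro PD hPD
    by_cases hne : PD = PDstar
    · rw [hne]
    · exact (hmax PD hPD hne).le
  · intro PD hPD heq
    by_contra hne
    exact absurd heq (ne_of_lt (hmax PD hPD hne))
end
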